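/- Let ℓ ≥ 0 be an integer, set ρ_j = ℓ/2 + 1 − j for j = 1,…,ℓ+1, and define the Baxter kernel Q(x,y|s) = 2^{ℓ+1} exp( Σ_{j=1}^{ℓ+1}(is − ρ_j)(x_j − y_j) − π Σ_{k=1}^{ℓ}( e^{2(x_k−y_k)} + e^{2(y_{k+1}−x_k)} ) − π e^{2(x_{ℓ+1}−y_{ℓ+1})} ). Then for every s ∈ ℂ and all x, y ∈ ℝ^{ℓ+1} the kernel satisfies the differential identity Σ_{j=1}^{ℓ+1} [ −(1/2)(∂/∂x_j + ρ_j)² Q ](x,y|s) + 4π² Σ_{k=1}^{ℓ} e^{2(x_{k+1}−x_k)} Q(x,y|s) = Σ_{j=1}^{ℓ+1} [ −(1/2)(∂/∂y_j − ρ_j)² Q ](x,y|s) + 4π² Σ_{k=1}^{ℓ} e^{2(y_{k+1}−y_k)} Q(x,y|s). -/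

import Mathlib

/-- The integral kernel of the Baxter `Q`-operator for the quantum
`gl_{ℓ+1}`-Toda chain, with `ρ_j = ℓ/2 + 1 − j`. -/
noncomputable def baxterKernel (ℓ : ℕ) (x y : Fin (ℓ+1) → ℝ) (s : ℂ) : ℂ :=
  2 ^ (ℓ+1) *
    Complex.exp ((∑ j : Fin (ℓ+1),
        (Complex.I * s - ((ℓ : ℂ)/2 + 1 - ((j : ℕ) + 1))) * ((x j - y j : ℝ) : ℂ))
      - (Real.pi : ℂ) * ∑ k : Fin ℓ,
          ((Real.exp (2 * (x k.castSucc - y k.castSucc)) : ℂ)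
            + (Real.exp (2 * (y k.succ - x k.castSucc)) : ℂ))
      - (Real.pi : ℂ) * (Real.exp (2 * (x (Fin.last ℓ) - y (Fin.last ℓ))) : ℂ))

/-- Partial derivative of `f : ℝ^{ℓ+1} → ℂ` in the `j`-th coordinate. -/
noncomputable def pderiv {m : ℕ} (j : Fin m) (f : (Fin m → ℝ) → ℂ) :
    (Fin m → ℝ) → ℂ :=
  fun x => deriv (fun u : ℝ => f (Function.update x j u)) (x j)

/-- The first-order operator `D_j = ∂/∂x_j + ρ_j` with `ρ_j = ℓ/2 + 1 − j`. -/
noncomputable def shiftedD (ℓ : ℕ) (ρ : Fin (ℓ+1) → ℂ) (j : Fin (ℓ+1))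
    (f : (Fin (ℓ+1) → ℝ) → ℂ) : (Fin (ℓ+1) → ℝ) → ℂ :=
  fun x => pderiv j f x + ρ j * f x

namespace BaxterAux

open Complex Finset Function

variable {ℓ : ℕ}

/-- `a_j = e^{2(x_j - y_j)}`. -/
noncomputable def aC (x y : Fin (ℓ+1) → ℝ) (j : Fin (ℓ+1)) : ℂ :=
  (Real.exp (2 * (x j - y j)) : ℂ)

/-- `b_j = e^{2(y_{j+1} - x_j)}` for `j < ℓ`, else `0`. -/
noncomputable def bC (x y : Fin (ℓ+1) → ℝ) (j : Fin (ℓ+1)) : ℂ :=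
  if h : (j : ℕ) < ℓ then (Real.exp (2 * (y ⟨(j:ℕ)+1, by omega⟩ - x j)) : ℂ) else 0

/-- `c_j = e^{2(y_j - x_{j-1})}` for `j > 0`, else `0`. -/
noncomputable def cC (x y : Fin (ℓ+1) → ℝ) (j : Fin (ℓ+1)) : ℂ :=
  if _ : 0 < (j : ℕ) then
    (Real.exp (2 * (y j - x ⟨(j:ℕ)-1, by have := j.isLt; omega⟩)) : ℂ) else 0

lemma sum_ite_castSucc (j : Fin (ℓ+1)) (f : Fin ℓ → ℂ) :
    (∑ k : Fin ℓ, if k.castSucc = j then f k else 0)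
      = if h : (j:ℕ) < ℓ then f ⟨(j:ℕ), h⟩ else 0 := by
  split_ifs with h
  · rw [Finset.sum_eq_single (⟨(j:ℕ), h⟩ : Fin ℓ)]
    · rw [if_pos (show Fin.castSucc ⟨(j:ℕ), h⟩ = j from Fin.ext rfl)]
    · intro k _ hk
      rw [if_neg]
      intro hc
      exact hk (Fin.ext (by simpa [Fin.ext_iff] using hc))
    · intro h'; exact absurd (Finset.mem_univ _) h'
  · refine Finset.sum_eq_zero fun k _ => if_neg fun hc => h ?_
    rw [← hc]; simpa using k.isLt

lemma sum_ite_succ (j : Fin (ℓ+1)) (f : Fin ℓ → ℂ) :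
    (∑ k : Fin ℓ, if k.succ = j then f k else 0)
      = if h : 0 < (j:ℕ) then f ⟨(j:ℕ)-1, by have := j.isLt; omega⟩ else 0 := by
  split_ifs with h
  · rw [Finset.sum_eq_single (⟨(j:ℕ)-1, by have := j.isLt; omega⟩ : Fin ℓ)]
    · rw [if_pos (show Fin.succ ⟨(j:ℕ)-1, by have := j.isLt; omega⟩ = j from Fin.ext (by simp; omega))]
    · intro k _ hk
      rw [if_neg]
      intro hc
      refine hk (Fin.ext ?_)
      have : (k : ℕ) + 1 = (j : ℕ) := by simpa [Fin.ext_iff] using hc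
      simp; omega
    · intro h'; exact absurd (Finset.mem_univ _) h'
  · refine Finset.sum_eq_zero fun k _ => if_neg fun hc => h ?_
    have : (k : ℕ) + 1 = (j : ℕ) := by simpa [Fin.ext_iff] using hc
    omega

lemma hasDerivAt_exp_right (c t : ℝ) :
    HasDerivAt (fun u : ℝ => ((Real.exp (2 * (u - c)) : ℝ) : ℂ))
      ((2 * Real.exp (2 * (t - c)) : ℝ) : ℂ) t := by
  have h0 : HasDerivAt (fun u : ℝ => 2 * (u - c)) 2 t := by
    simpa using ((hasDerivAt_id t).sub_const c).const_mul 2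
  have := (h0.exp).ofReal_comp
  convert this using 1
  push_cast; ring

lemma hasDerivAt_exp_left (c t : ℝ) :
    HasDerivAt (fun u : ℝ => ((Real.exp (2 * (c - u)) : ℝ) : ℂ))
      (-(((2 * Real.exp (2 * (c - t))) : ℝ) : ℂ)) t := by
  have h0 : HasDerivAt (fun u : ℝ => 2 * (c - u)) (-2) t := by
    simpa using ((hasDerivAt_id t).const_sub c).const_mul 2
  have := (h0.exp).ofReal_comp
  convert this using 1
  push_cast; ring


/-- Simplification of the raw derivative of the exponent in the `x_j` direction. -/
lemma dvalx (s : ℂ) (x y : Fin (ℓ+1) → ℝ) (j : Fin (ℓ+1)) :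
    (Complex.I * s - ((ℓ : ℂ)/2 + 1 - ((j : ℕ) + 1)))
      - (Real.pi : ℂ) * (∑ k : Fin ℓ, if k.castSucc = j then
          (((2 * Real.exp (2 * (x k.castSucc - y k.castSucc))) : ℝ) : ℂ)
            + (-(((2 * Real.exp (2 * (y k.succ - x k.castSucc))) : ℝ) : ℂ)) else 0)
      - (Real.pi : ℂ) * (if Fin.last ℓ = j then
          (((2 * Real.exp (2 * (x (Fin.last ℓ) - y (Fin.last ℓ)))) : ℝ) : ℂ) else 0)
    = Complex.I * s - ((ℓ : ℂ)/2 + 1 - ((j : ℕ) + 1))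
        - 2 * Real.pi * aC x y j + 2 * Real.pi * bC x y j := by
  rw [sum_ite_castSucc]
  rcases Nat.lt_or_ge (j : ℕ) ℓ with h | h
  · have hcs : Fin.castSucc (⟨(j:ℕ), h⟩ : Fin ℓ) = j := Fin.ext rfl
    rw [dif_pos h, if_neg (fun he => by
      have : ℓ = (j : ℕ) := by simpa [Fin.ext_iff] using he
      omega)]
    rw [bC, dif_pos h, aC, hcs]
    have hsucc : (⟨(j:ℕ), h⟩ : Fin ℓ).succ = (⟨(j:ℕ)+1, by omega⟩ : Fin (ℓ+1)) := rfl
    rw [hsucc]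
    push_cast
    ring
  · have hlast : Fin.last ℓ = j := Fin.ext (by have := j.isLt; simp; omega)
    rw [dif_neg (by omega), if_pos hlast, bC, dif_neg (by omega), aC, hlast]
    push_cast
    ring

/-- The kernel, as a function of `x j`, has the expected logarithmic derivative. -/
lemma keyx (s : ℂ) (x y : Fin (ℓ+1) → ℝ) (j : Fin (ℓ+1)) :
    HasDerivAt (fun u => baxterKernel ℓ (Function.update x j u) y s)
      ((Complex.I * s - ((ℓ : ℂ)/2 + 1 - ((j : ℕ) + 1))
          - 2 * Real.pi * aC x y j + 2 * Real.pi * bC x y j)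
        * baxterKernel ℓ x y s) (x j) := by
  have hS1 : HasDerivAt (fun u : ℝ => ∑ j' : Fin (ℓ+1),
      (Complex.I * s - ((ℓ : ℂ)/2 + 1 - ((j' : ℕ) + 1)))
        * ((Function.update x j u j' - y j' : ℝ) : ℂ))
      (Complex.I * s - ((ℓ : ℂ)/2 + 1 - ((j : ℕ) + 1))) (x j) := by
    have h : ∀ j' : Fin (ℓ+1), j' ∈ (Finset.univ : Finset (Fin (ℓ+1))) → HasDerivAt (fun u : ℝ =>
        (Complex.I * s - ((ℓ : ℂ)/2 + 1 - ((j' : ℕ) + 1)))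
          * ((Function.update x j u j' - y j' : ℝ) : ℂ))
        (if j' = j then Complex.I * s - ((ℓ : ℂ)/2 + 1 - ((j' : ℕ) + 1)) else 0) (x j) := by
      intro j' _
      by_cases hj : j' = j
      · subst hj
        simp only [Function.update_self, if_pos rfl]
        have h1 : HasDerivAt (fun u : ℝ => ((u - y j' : ℝ) : ℂ)) 1 (x j') := by
          simpa using ((hasDerivAt_id (x j')).sub_const (y j')).ofReal_comp
        simpa using h1.const_mul (Complex.I * s - ((ℓ : ℂ)/2 + 1 - ((j' : ℕ) + 1)))
      · simp only [Function.update_of_ne hj, if_neg hj]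
        exact hasDerivAt_const _ _
    have hsum := HasDerivAt.fun_sum h
    simpa [Finset.sum_ite_eq' Finset.univ j] using hsum
  have hS2 : HasDerivAt (fun u : ℝ => ∑ k : Fin ℓ,
      ((Real.exp (2 * (Function.update x j u k.castSucc - y k.castSucc)) : ℂ)
        + (Real.exp (2 * (y k.succ - Function.update x j u k.castSucc)) : ℂ)))
      (∑ k : Fin ℓ, if k.castSucc = j then
          (((2 * Real.exp (2 * (x k.castSucc - y k.castSucc))) : ℝ) : ℂ)
            + (-(((2 * Real.exp (2 * (y k.succ - x k.castSucc))) : ℝ) : ℂ)) else 0) (x j) := by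
    refine HasDerivAt.fun_sum fun k _ => ?_
    by_cases hk : k.castSucc = j
    · rw [if_pos hk]
      have hupd : ∀ u : ℝ, Function.update x j u k.castSucc = u := by
        intro u; rw [hk]; simp
      simp only [hupd, Function.update_self, hk]
      exact (hasDerivAt_exp_right (y j) (x j)).fun_add (hasDerivAt_exp_left (y k.succ) (x j))
    · rw [if_neg hk]
      simp only [Function.update_of_ne hk]
      exact hasDerivAt_const _ _
  have hS3 : HasDerivAt (fun u : ℝ =>
      ((Real.exp (2 * (Function.update x j u (Fin.last ℓ) - y (Fin.last ℓ))) : ℝ) : ℂ))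
      (if Fin.last ℓ = j then
        (((2 * Real.exp (2 * (x (Fin.last ℓ) - y (Fin.last ℓ)))) : ℝ) : ℂ) else 0) (x j) := by
    by_cases hl : Fin.last ℓ = j
    · rw [if_pos hl]
      have hupd : ∀ u : ℝ, Function.update x j u (Fin.last ℓ) = u := by
        intro u; rw [hl]; simp
      simp only [hupd, Function.update_self, hl]
      exact hasDerivAt_exp_right (y j) (x j)
    · rw [if_neg hl]
      simp only [Function.update_of_ne hl]
      exact hasDerivAt_const _ _
  have hE := (hS1.fun_sub (hS2.const_mul ((Real.pi : ℝ) : ℂ))).fun_sub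
    (hS3.const_mul ((Real.pi : ℝ) : ℂ))
  have hQ := (hE.cexp).const_mul ((2 : ℂ) ^ (ℓ+1))
  simp only [Function.update_eq_self] at hQ
  unfold baxterKernel
  convert hQ using 1
  · rfl
  rw [← dvalx s x y j]
  ring


/-- Derivative of the shifted logarithmic derivative `ψ = I s - 2π a + 2π b`
in the `x_j` direction. -/
lemma keyx2 (s : ℂ) (x y : Fin (ℓ+1) → ℝ) (j : Fin (ℓ+1)) :
    HasDerivAt (fun u => Complex.I * s
        - 2 * Real.pi * aC (Function.update x j u) y j
        + 2 * Real.pi * bC (Function.update x j u) y j)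
      (-(4 * Real.pi * aC x y j) - 4 * Real.pi * bC x y j) (x j) := by
  simp only [aC, bC, Function.update_self]
  split_ifs with h
  · have h1 := (hasDerivAt_exp_right (y j) (x j)).const_mul ((2 * Real.pi : ℝ) : ℂ)
    have h2 := (hasDerivAt_exp_left ((y ⟨(j:ℕ)+1, by omega⟩ : ℝ)) (x j)).const_mul
      ((2 * Real.pi : ℝ) : ℂ)
    have := ((hasDerivAt_const (x j) (Complex.I * s)).fun_sub h1).fun_add h2
    convert this using 1
    · rfl
    · funext u; push_cast; ring
    · push_cast; ring
  · have h1 := (hasDerivAt_exp_right (y j) (x j)).const_mul ((2 * Real.pi : ℝ) : ℂ)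
    have := ((hasDerivAt_const (x j) (Complex.I * s)).fun_sub h1).fun_add
      (hasDerivAt_const (x j) (0 : ℂ))
    convert this using 1
    · rfl
    · funext u; push_cast; ring
    · push_cast; ring

set_option maxHeartbeats 1000000 in
/-- The second-order x-side identity. -/
lemma shiftedD2_x (s : ℂ) (x y : Fin (ℓ+1) → ℝ) (j : Fin (ℓ+1)) :
    shiftedD ℓ (fun j => ((ℓ : ℂ)/2 + 1 - ((j : ℕ) + 1))) j
      (shiftedD ℓ (fun j => ((ℓ : ℂ)/2 + 1 - ((j : ℕ) + 1))) j
        (fun x' => baxterKernel ℓ x' y s)) x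
    = ((Complex.I * s - 2 * Real.pi * aC x y j + 2 * Real.pi * bC x y j)^2
        - 4 * Real.pi * (aC x y j + bC x y j)) * baxterKernel ℓ x y s := by
  have hp : ∀ x' : Fin (ℓ+1) → ℝ, pderiv j (fun x'' => baxterKernel ℓ x'' y s) x'
      = (Complex.I * s - ((ℓ : ℂ)/2 + 1 - ((j : ℕ) + 1))
          - 2 * Real.pi * aC x' y j + 2 * Real.pi * bC x' y j)
        * baxterKernel ℓ x' y s := by
    intro x'
    simp only [pderiv]
    exact (keyx s x' y j).deriv
  have hin : shiftedD ℓ (fun j => ((ℓ : ℂ)/2 + 1 - ((j : ℕ) + 1))) j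
      (fun x' => baxterKernel ℓ x' y s)
      = fun x' => (Complex.I * s - 2 * Real.pi * aC x' y j + 2 * Real.pi * bC x' y j)
          * baxterKernel ℓ x' y s := by
    funext x'
    simp only [shiftedD]
    rw [hp x']
    ring
  rw [hin]
  simp only [shiftedD]
  have hD := (keyx2 s x y j).fun_mul (keyx s x y j)
  simp only [Function.update_eq_self] at hD
  have h2 : pderiv j (fun x' =>
      (Complex.I * s - 2 * Real.pi * aC x' y j + 2 * Real.pi * bC x' y j)
        * baxterKernel ℓ x' y s) x
      = (-(4 * Real.pi * aC x y j) - 4 * Real.pi * bC x y j) * baxterKernel ℓ x y s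
        + (Complex.I * s - 2 * Real.pi * aC x y j + 2 * Real.pi * bC x y j)
          * ((Complex.I * s - ((ℓ : ℂ)/2 + 1 - ((j : ℕ) + 1))
              - 2 * Real.pi * aC x y j + 2 * Real.pi * bC x y j)
            * baxterKernel ℓ x y s) := by
    simp only [pderiv]
    exact hD.deriv
  rw [h2]
  ring


lemma sum_succ_term (x y : Fin (ℓ+1) → ℝ) (j : Fin (ℓ+1)) :
    (∑ k : Fin ℓ, if k.succ = j then
        (((2 * Real.exp (2 * (y k.succ - x k.castSucc))) : ℝ) : ℂ) else 0)
    = 2 * cC x y j := by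
  rcases Nat.eq_zero_or_pos (j : ℕ) with h0 | h0
  · rw [cC, dif_neg (by omega), mul_zero]
    refine Finset.sum_eq_zero fun k _ => if_neg fun hc => ?_
    have : (k : ℕ) + 1 = (j : ℕ) := by simpa [Fin.ext_iff] using hc
    omega
  · have hjl : (j : ℕ) - 1 < ℓ := by have := j.isLt; omega
    have hk : (⟨(j:ℕ)-1, hjl⟩ : Fin ℓ).succ = j := Fin.ext (by simp; omega)
    rw [Finset.sum_eq_single (⟨(j:ℕ)-1, hjl⟩ : Fin ℓ)]
    · rw [if_pos hk, hk, cC, dif_pos h0]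
      rw [show x ((⟨(j:ℕ)-1, hjl⟩ : Fin ℓ).castSucc)
          = x ⟨(j:ℕ)-1, by have := j.isLt; omega⟩ from rfl]
      push_cast
      ring
    · intro k _ hne
      refine if_neg fun hc => hne (Fin.ext ?_)
      have : (k : ℕ) + 1 = (j : ℕ) := by simpa [Fin.ext_iff] using hc
      simp; omega
    · intro h'; exact absurd (Finset.mem_univ _) h'

/-- Simplification of the raw derivative of the exponent in the `y_j` direction. -/
lemma dvaly (s : ℂ) (x y : Fin (ℓ+1) → ℝ) (j : Fin (ℓ+1)) :
    (-(Complex.I * s - ((ℓ : ℂ)/2 + 1 - ((j : ℕ) + 1))))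
      - (Real.pi : ℂ) * (∑ k : Fin ℓ,
          ((if k.castSucc = j then
              -(((2 * Real.exp (2 * (x k.castSucc - y k.castSucc))) : ℝ) : ℂ) else 0)
            + (if k.succ = j then
              (((2 * Real.exp (2 * (y k.succ - x k.castSucc))) : ℝ) : ℂ) else 0)))
      - (Real.pi : ℂ) * (if Fin.last ℓ = j then
          -(((2 * Real.exp (2 * (x (Fin.last ℓ) - y (Fin.last ℓ)))) : ℝ) : ℂ) else 0)
    = -(Complex.I * s - ((ℓ : ℂ)/2 + 1 - ((j : ℕ) + 1)))
        + 2 * Real.pi * aC x y j - 2 * Real.pi * cC x y j := by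
  rw [Finset.sum_add_distrib, sum_succ_term, sum_ite_castSucc]
  rcases Nat.lt_or_ge (j : ℕ) ℓ with h | h
  · have hcs : Fin.castSucc (⟨(j:ℕ), h⟩ : Fin ℓ) = j := Fin.ext rfl
    rw [dif_pos h, if_neg (fun he => by
      have : ℓ = (j : ℕ) := by simpa [Fin.ext_iff] using he
      omega), hcs, aC]
    push_cast; ring
  · have hlast : Fin.last ℓ = j := Fin.ext (by have := j.isLt; simp; omega)
    rw [dif_neg (by omega), if_pos hlast, aC, hlast]
    push_cast; ring

lemma hasDerivAt_kernel_y (s : ℂ) (x y : Fin (ℓ+1) → ℝ) (j : Fin (ℓ+1)) :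
    HasDerivAt (fun u => baxterKernel ℓ x (Function.update y j u) s)
      ((-(Complex.I * s - ((ℓ : ℂ)/2 + 1 - ((j : ℕ) + 1)))
          + 2 * Real.pi * aC x y j - 2 * Real.pi * cC x y j)
        * baxterKernel ℓ x y s) (y j) := by
  have hS1 : HasDerivAt (fun u : ℝ => ∑ j' : Fin (ℓ+1),
      (Complex.I * s - ((ℓ : ℂ)/2 + 1 - ((j' : ℕ) + 1)))
        * ((x j' - Function.update y j u j' : ℝ) : ℂ))
      (-(Complex.I * s - ((ℓ : ℂ)/2 + 1 - ((j : ℕ) + 1)))) (y j) := by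
    have h : ∀ j' : Fin (ℓ+1), j' ∈ (Finset.univ : Finset (Fin (ℓ+1))) → HasDerivAt (fun u : ℝ =>
        (Complex.I * s - ((ℓ : ℂ)/2 + 1 - ((j' : ℕ) + 1)))
          * ((x j' - Function.update y j u j' : ℝ) : ℂ))
        (if j' = j then -(Complex.I * s - ((ℓ : ℂ)/2 + 1 - ((j' : ℕ) + 1))) else 0) (y j) := by
      intro j' _
      by_cases hj : j' = j
      · subst hj
        simp only [Function.update_self, if_pos rfl]
        have h1 : HasDerivAt (fun u : ℝ => ((x j' - u : ℝ) : ℂ)) (-1) (y j') := by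
          have := ((hasDerivAt_id (y j')).const_sub (x j')).ofReal_comp
          convert this using 1
          all_goals simp
        simpa using h1.const_mul (Complex.I * s - ((ℓ : ℂ)/2 + 1 - ((j' : ℕ) + 1)))
      · simp only [Function.update_of_ne hj, if_neg hj]
        exact hasDerivAt_const _ _
    have hsum := HasDerivAt.fun_sum h
    simpa [Finset.sum_ite_eq' Finset.univ j] using hsum
  have hS2 : HasDerivAt (fun u : ℝ => ∑ k : Fin ℓ,
      ((Real.exp (2 * (x k.castSucc - Function.update y j u k.castSucc)) : ℂ)
        + (Real.exp (2 * (Function.update y j u k.succ - x k.castSucc)) : ℂ)))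
      (∑ k : Fin ℓ,
        ((if k.castSucc = j then
            -(((2 * Real.exp (2 * (x k.castSucc - y k.castSucc))) : ℝ) : ℂ) else 0)
          + (if k.succ = j then
            (((2 * Real.exp (2 * (y k.succ - x k.castSucc))) : ℝ) : ℂ) else 0))) (y j) := by
    refine HasDerivAt.fun_sum fun k _ => ?_
    refine HasDerivAt.fun_add ?_ ?_
    · by_cases hk : k.castSucc = j
      · rw [if_pos hk]
        have hupd : ∀ u : ℝ, Function.update y j u k.castSucc = u := by
          intro u; rw [hk]; simp
        simp only [hupd, Function.update_self, hk]
        exact hasDerivAt_exp_left (x j) (y j)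
      · rw [if_neg hk]
        simp only [Function.update_of_ne hk]
        exact hasDerivAt_const _ _
    · by_cases hk : k.succ = j
      · rw [if_pos hk]
        have hupd : ∀ u : ℝ, Function.update y j u k.succ = u := by
          intro u; rw [hk]; simp
        simp only [hupd, Function.update_self, hk]
        exact hasDerivAt_exp_right (x k.castSucc) (y j)
      · rw [if_neg hk]
        simp only [Function.update_of_ne hk]
        exact hasDerivAt_const _ _
  have hS3 : HasDerivAt (fun u : ℝ =>
      ((Real.exp (2 * (x (Fin.last ℓ) - Function.update y j u (Fin.last ℓ))) : ℝ) : ℂ))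
      (if Fin.last ℓ = j then
        -(((2 * Real.exp (2 * (x (Fin.last ℓ) - y (Fin.last ℓ)))) : ℝ) : ℂ) else 0) (y j) := by
    by_cases hl : Fin.last ℓ = j
    · rw [if_pos hl]
      have hupd : ∀ u : ℝ, Function.update y j u (Fin.last ℓ) = u := by
        intro u; rw [hl]; simp
      simp only [hupd, Function.update_self, hl]
      exact hasDerivAt_exp_left (x j) (y j)
    · rw [if_neg hl]
      simp only [Function.update_of_ne hl]
      exact hasDerivAt_const _ _
  have hE := (hS1.fun_sub (hS2.const_mul ((Real.pi : ℝ) : ℂ))).fun_sub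
    (hS3.const_mul ((Real.pi : ℝ) : ℂ))
  have hQ := (hE.cexp).const_mul ((2 : ℂ) ^ (ℓ+1))
  simp only [Function.update_eq_self] at hQ
  unfold baxterKernel
  convert hQ using 1
  · rfl
  rw [← dvaly s x y j]
  ring

lemma keyy2 (s : ℂ) (x y : Fin (ℓ+1) → ℝ) (j : Fin (ℓ+1)) :
    HasDerivAt (fun u => -(Complex.I * s)
        + 2 * Real.pi * aC x (Function.update y j u) j
        - 2 * Real.pi * cC x (Function.update y j u) j)
      (-(4 * Real.pi * aC x y j) - 4 * Real.pi * cC x y j) (y j) := by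
  simp only [aC, cC, Function.update_self]
  split_ifs with h
  · have h1 := (hasDerivAt_exp_left (x j) (y j)).const_mul ((2 * Real.pi : ℝ) : ℂ)
    have h2 := (hasDerivAt_exp_right
      ((x ⟨(j:ℕ)-1, by have := j.isLt; omega⟩ : ℝ)) (y j)).const_mul
      ((2 * Real.pi : ℝ) : ℂ)
    have := ((hasDerivAt_const (y j) (-(Complex.I * s))).fun_add h1).fun_sub h2
    convert this using 1
    · rfl
    · funext u; push_cast; ring
    · push_cast; ring
  · have h1 := (hasDerivAt_exp_left (x j) (y j)).const_mul ((2 * Real.pi : ℝ) : ℂ)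
    have := ((hasDerivAt_const (y j) (-(Complex.I * s))).fun_add h1).fun_sub
      (hasDerivAt_const (y j) (0 : ℂ))
    convert this using 1
    · rfl
    · funext u; push_cast; ring
    · push_cast; ring

set_option maxHeartbeats 1000000 in
/-- The second-order y-side identity. -/
lemma shiftedD2_y (s : ℂ) (x y : Fin (ℓ+1) → ℝ) (j : Fin (ℓ+1)) :
    shiftedD ℓ (fun j => -((ℓ : ℂ)/2 + 1 - ((j : ℕ) + 1))) j
      (shiftedD ℓ (fun j => -((ℓ : ℂ)/2 + 1 - ((j : ℕ) + 1))) j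
        (fun y' => baxterKernel ℓ x y' s)) y
    = ((Complex.I * s - 2 * Real.pi * aC x y j + 2 * Real.pi * cC x y j)^2
        - 4 * Real.pi * (aC x y j + cC x y j)) * baxterKernel ℓ x y s := by
  have hp : ∀ y' : Fin (ℓ+1) → ℝ, pderiv j (fun y'' => baxterKernel ℓ x y'' s) y'
      = (-(Complex.I * s - ((ℓ : ℂ)/2 + 1 - ((j : ℕ) + 1)))
          + 2 * Real.pi * aC x y' j - 2 * Real.pi * cC x y' j)
        * baxterKernel ℓ x y' s := by
    intro y'
    simp only [pderiv]
    exact (hasDerivAt_kernel_y s x y' j).deriv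
  have hin : shiftedD ℓ (fun j => -((ℓ : ℂ)/2 + 1 - ((j : ℕ) + 1))) j
      (fun y' => baxterKernel ℓ x y' s)
      = fun y' => (-(Complex.I * s) + 2 * Real.pi * aC x y' j - 2 * Real.pi * cC x y' j)
          * baxterKernel ℓ x y' s := by
    funext y'
    simp only [shiftedD]
    rw [hp y']
    ring
  rw [hin]
  simp only [shiftedD]
  have hD := (keyy2 s x y j).fun_mul (hasDerivAt_kernel_y s x y j)
  simp only [Function.update_eq_self] at hD
  have h2 : pderiv j (fun y' =>
      (-(Complex.I * s) + 2 * Real.pi * aC x y' j - 2 * Real.pi * cC x y' j)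
        * baxterKernel ℓ x y' s) y
      = (-(4 * Real.pi * aC x y j) - 4 * Real.pi * cC x y j) * baxterKernel ℓ x y s
        + (-(Complex.I * s) + 2 * Real.pi * aC x y j - 2 * Real.pi * cC x y j)
          * ((-(Complex.I * s - ((ℓ : ℂ)/2 + 1 - ((j : ℕ) + 1)))
              + 2 * Real.pi * aC x y j - 2 * Real.pi * cC x y j)
            * baxterKernel ℓ x y s) := by
    simp only [pderiv]
    exact hD.deriv
  rw [h2]
  ring


variable (x y : Fin (ℓ+1) → ℝ)

lemma bC_castSucc (k : Fin ℓ) :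
    bC x y k.castSucc = (Real.exp (2 * (y k.succ - x k.castSucc)) : ℂ) := by
  rw [bC, dif_pos (show ((k.castSucc : Fin (ℓ+1)) : ℕ) < ℓ by simpa using k.isLt)]
  rfl

lemma bC_last : bC x y (Fin.last ℓ) = 0 := by
  rw [bC, dif_neg]; simp

lemma cC_succ (k : Fin ℓ) :
    cC x y k.succ = (Real.exp (2 * (y k.succ - x k.castSucc)) : ℂ) := by
  rw [cC, dif_pos (show 0 < ((k.succ : Fin (ℓ+1)) : ℕ) by simp)]
  rfl

lemma cC_zero : cC x y (0 : Fin (ℓ+1)) = 0 := by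
  rw [cC, dif_neg]; simp

lemma sumb : ∑ j : Fin (ℓ+1), bC x y j
    = ∑ k : Fin ℓ, (Real.exp (2 * (y k.succ - x k.castSucc)) : ℂ) := by
  rw [Fin.sum_univ_castSucc, bC_last, add_zero]
  exact Finset.sum_congr rfl fun k _ => bC_castSucc x y k

lemma sumc : ∑ j : Fin (ℓ+1), cC x y j
    = ∑ k : Fin ℓ, (Real.exp (2 * (y k.succ - x k.castSucc)) : ℂ) := by
  rw [Fin.sum_univ_succ, cC_zero, zero_add]
  exact Finset.sum_congr rfl fun k _ => cC_succ x y k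

lemma sumb2 : ∑ j : Fin (ℓ+1), (bC x y j)^2
    = ∑ k : Fin ℓ, ((Real.exp (2 * (y k.succ - x k.castSucc)) : ℂ))^2 := by
  rw [Fin.sum_univ_castSucc, bC_last]
  simp only [add_zero, ne_eq, OfNat.ofNat_ne_zero, not_false_eq_true, zero_pow]
  exact Finset.sum_congr rfl fun k _ => by rw [bC_castSucc]

lemma sumc2 : ∑ j : Fin (ℓ+1), (cC x y j)^2
    = ∑ k : Fin ℓ, ((Real.exp (2 * (y k.succ - x k.castSucc)) : ℂ))^2 := by
  rw [Fin.sum_univ_succ, cC_zero]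
  simp only [zero_add, ne_eq, OfNat.ofNat_ne_zero, not_false_eq_true, zero_pow]
  exact Finset.sum_congr rfl fun k _ => by rw [cC_succ]

lemma sumab : ∑ j : Fin (ℓ+1), aC x y j * bC x y j
    = ∑ k : Fin ℓ, (Real.exp (2 * (y k.succ - y k.castSucc)) : ℂ) := by
  rw [Fin.sum_univ_castSucc, bC_last, mul_zero, add_zero]
  refine Finset.sum_congr rfl fun k _ => ?_
  rw [bC_castSucc, aC, ← Complex.ofReal_mul, ← Real.exp_add,
    show 2 * (x k.castSucc - y k.castSucc) + 2 * (y k.succ - x k.castSucc)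
      = 2 * (y k.succ - y k.castSucc) from by ring]

lemma sumac : ∑ j : Fin (ℓ+1), aC x y j * cC x y j
    = ∑ k : Fin ℓ, (Real.exp (2 * (x k.succ - x k.castSucc)) : ℂ) := by
  rw [Fin.sum_univ_succ, cC_zero, mul_zero, zero_add]
  refine Finset.sum_congr rfl fun k _ => ?_
  rw [cC_succ, aC, ← Complex.ofReal_mul, ← Real.exp_add,
    show 2 * (x k.succ - y k.succ) + 2 * (y k.succ - x k.castSucc)
      = 2 * (x k.succ - x k.castSucc) from by ring]

end BaxterAux

set_option maxHeartbeats 1000000 in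
/-- The differential identity for the Baxter kernel expressing the commutation
of the Baxter operator with the quadratic quantum Toda Hamiltonian:
`Σ_j [−(1/2)(∂/∂x_j + ρ_j)² Q](x,y|s) + 4π² Σ_k e^{2(x_{k+1}−x_k)} Q(x,y|s)
 = Σ_j [−(1/2)(∂/∂y_j − ρ_j)² Q](x,y|s) + 4π² Σ_k e^{2(y_{k+1}−y_k)} Q(x,y|s)`. -/
theorem baxterKernel_toda_commutation (ℓ : ℕ) (s : ℂ) (x y : Fin (ℓ+1) → ℝ) :
    (∑ j : Fin (ℓ+1), (-(1/2 : ℂ)) *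
        shiftedD ℓ (fun j => ((ℓ : ℂ)/2 + 1 - ((j : ℕ) + 1))) j
          (shiftedD ℓ (fun j => ((ℓ : ℂ)/2 + 1 - ((j : ℕ) + 1))) j
            (fun x' => baxterKernel ℓ x' y s)) x)
      + 4 * (Real.pi : ℂ)^2 * (∑ k : Fin ℓ,
          (Real.exp (2 * (x k.succ - x k.castSucc)) : ℂ)) * baxterKernel ℓ x y s
    = (∑ j : Fin (ℓ+1), (-(1/2 : ℂ)) *
        shiftedD ℓ (fun j => -((ℓ : ℂ)/2 + 1 - ((j : ℕ) + 1))) j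
          (shiftedD ℓ (fun j => -((ℓ : ℂ)/2 + 1 - ((j : ℕ) + 1))) j
            (fun y' => baxterKernel ℓ x y' s)) y)
      + 4 * (Real.pi : ℂ)^2 * (∑ k : Fin ℓ,
          (Real.exp (2 * (y k.succ - y k.castSucc)) : ℂ)) * baxterKernel ℓ x y s := by

  simp only [BaxterAux.shiftedD2_x, BaxterAux.shiftedD2_y]
  have e1 : ∀ j : Fin (ℓ+1), (-(1/2 : ℂ)) *
      (((Complex.I * s - 2 * Real.pi * BaxterAux.aC x y j
          + 2 * Real.pi * BaxterAux.bC x y j)^2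
        - 4 * Real.pi * (BaxterAux.aC x y j + BaxterAux.bC x y j))
        * baxterKernel ℓ x y s)
      = ((-(1/2 : ℂ)) * (Complex.I * s - 2 * Real.pi * BaxterAux.aC x y j)^2
          + 2 * Real.pi * BaxterAux.aC x y j
          + (-(2 * (Real.pi : ℂ)^2)) * (BaxterAux.bC x y j)^2
          + (2 * (Real.pi : ℂ) - 2 * Real.pi * (Complex.I * s)) * BaxterAux.bC x y j
          + (4 * (Real.pi : ℂ)^2) * (BaxterAux.aC x y j * BaxterAux.bC x y j))
        * baxterKernel ℓ x y s := by
    intro j; ring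
  have e2 : ∀ j : Fin (ℓ+1), (-(1/2 : ℂ)) *
      (((Complex.I * s - 2 * Real.pi * BaxterAux.aC x y j
          + 2 * Real.pi * BaxterAux.cC x y j)^2
        - 4 * Real.pi * (BaxterAux.aC x y j + BaxterAux.cC x y j))
        * baxterKernel ℓ x y s)
      = ((-(1/2 : ℂ)) * (Complex.I * s - 2 * Real.pi * BaxterAux.aC x y j)^2
          + 2 * Real.pi * BaxterAux.aC x y j
          + (-(2 * (Real.pi : ℂ)^2)) * (BaxterAux.cC x y j)^2
          + (2 * (Real.pi : ℂ) - 2 * Real.pi * (Complex.I * s)) * BaxterAux.cC x y j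
          + (4 * (Real.pi : ℂ)^2) * (BaxterAux.aC x y j * BaxterAux.cC x y j))
        * baxterKernel ℓ x y s := by
    intro j; ring
  simp only [e1, e2]
  rw [← Finset.sum_mul, ← Finset.sum_mul]
  simp only [Finset.sum_add_distrib, ← Finset.mul_sum]
  rw [BaxterAux.sumb, BaxterAux.sumc, BaxterAux.sumb2, BaxterAux.sumc2,
    BaxterAux.sumab, BaxterAux.sumac]
  ring
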